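/- In the dyadic setup with Z_{ij} = z(W_i, X_j) bounded and R_{ij} = (1, Z_{ij}')', let N = N_n, M = M_n with N_n + M_n = n and M_n/n → φ ∈ (0,1), and define H_n(ϑ) = −(NM)^{-1} Σ_{i=1}^N Σ_{j=1}^M e(R_{ij}'ϑ)[1 − e(R_{ij}'ϑ)] R_{ij} R_{ij}'. Then for each fixed θ = (α, β')' with α > 0, writing θ_n = (ln(α/n), β')', one has n H_n(θ_n) → Γ(θ) := −α E[exp(Z_{12}'β) R_{12} R_{12}'] in probability as n → ∞. -/

import Mathlib

open MeasureTheory ProbabilityTheory Filter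
open scoped BigOperators Topology

namespace SparseNet

/-- The logistic function `e(v) = exp(v)/(1 + exp(v))`. -/
noncomputable def logistic (v : ℝ) : ℝ := Real.exp v / (1 + Real.exp v)

/-- Frobenius norm of a real matrix. -/
noncomputable def frobNorm {m n : ℕ} (M : Matrix (Fin m) (Fin n) ℝ) : ℝ :=
  Real.sqrt (∑ a, ∑ b, (M a b) ^ 2)

/-- Codomains for the combined two-sample family. -/
def pairType (𝒲 𝒳 : Type) : ℕ ⊕ ℕ → Type
  | Sum.inl _ => 𝒲
  | Sum.inr _ => 𝒳

/-- Measurable-space structure on the codomains. -/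
def pairMS {𝒲 𝒳 : Type} [MeasurableSpace 𝒲] [MeasurableSpace 𝒳] :
    ∀ t : ℕ ⊕ ℕ, MeasurableSpace (pairType 𝒲 𝒳 t)
  | Sum.inl _ => inferInstanceAs (MeasurableSpace 𝒲)
  | Sum.inr _ => inferInstanceAs (MeasurableSpace 𝒳)

/-- The combined family `(W_i)_i ∪ (X_j)_j`. -/
def pairFam {Ω 𝒲 𝒳 : Type} (W : ℕ → Ω → 𝒲) (X : ℕ → Ω → 𝒳) :
    ∀ t : ℕ ⊕ ℕ, Ω → pairType 𝒲 𝒳 t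
  | Sum.inl i => W i
  | Sum.inr j => X j

variable {Ω 𝒲 𝒳 : Type} {k : ℕ}

/-- The regressor vector `R_{ij} = (1, z(W_i, X_j)')'`. -/
def Rreg (z : 𝒲 → 𝒳 → Fin k → ℝ) (W : ℕ → Ω → 𝒲) (X : ℕ → Ω → 𝒳)
    (i j : ℕ) (ω : Ω) : Fin (k + 1) → ℝ :=
  Fin.cons 1 (z (W i ω) (X j ω))

/-- The composite-likelihood Hessian
`H(ϑ) = −(NM)⁻¹ Σᵢ Σⱼ e(R_{ij}'ϑ)[1 − e(R_{ij}'ϑ)] R_{ij} R_{ij}'`. -/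
noncomputable def Hess (z : 𝒲 → 𝒳 → Fin k → ℝ) (W : ℕ → Ω → 𝒲) (X : ℕ → Ω → 𝒳)
    (N M : ℕ) (ϑ : Fin (k + 1) → ℝ) (ω : Ω) : Matrix (Fin (k + 1)) (Fin (k + 1)) ℝ :=
  Matrix.of fun a b => -(((N : ℝ) * M)⁻¹ *
    ∑ i ∈ Finset.Icc 1 N, ∑ j ∈ Finset.Icc 1 M,
      logistic (∑ u, Rreg z W X i j ω u * ϑ u) *
        (1 - logistic (∑ u, Rreg z W X i j ω u * ϑ u)) *
        Rreg z W X i j ω a * Rreg z W X i j ω b)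

/-- The limiting Hessian `Γ(θ) = −α E[exp(Z_{12}'β) R_{12} R_{12}']`. -/
noncomputable def GammaMat [MeasurableSpace Ω] (μ : Measure Ω)
    (z : 𝒲 → 𝒳 → Fin k → ℝ) (W : ℕ → Ω → 𝒲) (X : ℕ → Ω → 𝒳)
    (α : ℝ) (β : Fin k → ℝ) : Matrix (Fin (k + 1)) (Fin (k + 1)) ℝ :=
  Matrix.of fun a b => -(α *
    ∫ ω, Real.exp (∑ u, z (W 1 ω) (X 2 ω) u * β u) *
      Rreg z W X 1 2 ω a * Rreg z W X 1 2 ω b ∂μ)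

/-- The sparse parametrization `θ_n = (ln(α/n), β')'`. -/
noncomputable def thetaN (n : ℕ) (α : ℝ) (β : Fin k → ℝ) : Fin (k + 1) → ℝ :=
  Fin.cons (Real.log (α / n)) β


set_option maxHeartbeats 1000000
section Aux

/-- Deterministic approximation of the rescaled logistic curvature. -/
lemma det_approx (α T : ℝ) (hα : 0 < α) (n : ℕ) (hn : 1 ≤ n) (t : ℝ) (ht : |t| ≤ T) :
    |(n : ℝ) * (logistic (Real.log (α / n) + t) *
        (1 - logistic (Real.log (α / n) + t))) - α * Real.exp t|
      ≤ α ^ 2 * Real.exp (2 * T) * (2 + α * Real.exp T) / n := by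
  have hn0 : (0 : ℝ) < n := by exact_mod_cast hn
  have hαn : 0 < α / n := div_pos hα hn0
  set x : ℝ := Real.exp (Real.log (α / n) + t) with hxdef
  have hx0 : 0 < x := Real.exp_pos _
  have hx : x = α / n * Real.exp t := by
    rw [hxdef, Real.exp_add, Real.exp_log hαn]
  have h1x : (0:ℝ) < 1 + x := by linarith
  have hL : logistic (Real.log (α / n) + t) = x / (1 + x) := rfl
  have h1L : 1 - logistic (Real.log (α / n) + t) = 1 / (1 + x) := by
    rw [hL]; field_simp; ring
  have hnx : (n : ℝ) * x = α * Real.exp t := by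
    rw [hx]; field_simp
  have key : (n : ℝ) * (logistic (Real.log (α / n) + t) *
      (1 - logistic (Real.log (α / n) + t))) - α * Real.exp t
      = -(α * Real.exp t) * (x ^ 2 + 2 * x) / (1 + x) ^ 2 := by
    rw [h1L, hL, ← hnx]
    field_simp
    ring
  rw [key]
  have het : Real.exp t ≤ Real.exp T := Real.exp_le_exp.2 (le_trans (le_abs_self t) ht)
  have hxT : x ≤ α * Real.exp T / n := by
    rw [hx]; rw [div_mul_eq_mul_div]
    gcongr
  have hn1 : (1:ℝ) ≤ n := by exact_mod_cast hn
  have hxT1 : x ≤ α * Real.exp T := le_trans hxT (by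
    rw [div_le_iff₀ hn0]
    nlinarith [mul_le_mul_of_nonneg_left hn1 (le_of_lt (mul_pos hα (Real.exp_pos T)))])
  have hnum : (0:ℝ) ≤ α * Real.exp t * (x ^ 2 + 2 * x) / (1 + x) ^ 2 := by
    have : (0:ℝ) ≤ x ^ 2 + 2 * x := by nlinarith [sq_nonneg x]
    positivity
  have habs : |(-(α * Real.exp t) * (x ^ 2 + 2 * x) / (1 + x) ^ 2)|
      = α * Real.exp t * (x ^ 2 + 2 * x) / (1 + x) ^ 2 := by
    have : -(α * Real.exp t) * (x ^ 2 + 2 * x) / (1 + x) ^ 2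
        = -(α * Real.exp t * (x ^ 2 + 2 * x) / (1 + x) ^ 2) := by ring
    rw [this, abs_neg, abs_of_nonneg hnum]
  rw [habs]
  have hden : (1:ℝ) ≤ (1 + x) ^ 2 := by nlinarith
  have step1 : α * Real.exp t * (x ^ 2 + 2 * x) / (1 + x) ^ 2
      ≤ α * Real.exp t * (x ^ 2 + 2 * x) := by
    apply div_le_self (by nlinarith [mul_pos hα (Real.exp_pos t), hx0, sq_nonneg x]) hden
  refine step1.trans ?_
  have hx2 : x ^ 2 + 2 * x ≤ (α * Real.exp T / n) * (α * Real.exp T + 2) := by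
    have : x ^ 2 + 2 * x = x * (x + 2) := by ring
    rw [this]
    have h2 : x + 2 ≤ α * Real.exp T + 2 := by linarith
    calc x * (x + 2) ≤ (α * Real.exp T / n) * (x + 2) := by
          apply mul_le_mul_of_nonneg_right hxT (by linarith)
      _ ≤ (α * Real.exp T / n) * (α * Real.exp T + 2) := by
          apply mul_le_mul_of_nonneg_left h2 (by positivity)
  calc α * Real.exp t * (x ^ 2 + 2 * x)
      ≤ α * Real.exp T * ((α * Real.exp T / n) * (α * Real.exp T + 2)) := by
        apply mul_le_mul (by gcongr) hx2 (by nlinarith [hx0]) (by positivity)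
    _ = α ^ 2 * Real.exp (2*T) * (2 + α * Real.exp T) / n := by
        rw [two_mul, Real.exp_add]; field_simp; ring


lemma sum_sq_le_sq_sum {ι : Type*} (s : Finset ι) (f : ι → ℝ) (h : ∀ i ∈ s, 0 ≤ f i) :
    ∑ i ∈ s, f i ^ 2 ≤ (∑ i ∈ s, f i) ^ 2 := by
  have step : ∀ i ∈ s, f i ^ 2 ≤ f i * (∑ j ∈ s, f j) := fun i hi => by
    rw [sq]
    exact mul_le_mul_of_nonneg_left (Finset.single_le_sum h hi) (h i hi)
  calc ∑ i ∈ s, f i ^ 2 ≤ ∑ i ∈ s, f i * (∑ j ∈ s, f j) := Finset.sum_le_sum step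
    _ = (∑ i ∈ s, f i) ^ 2 := by rw [← Finset.sum_mul, sq]

lemma frobNorm_le_sum_abs {m n : ℕ} (A : Matrix (Fin m) (Fin n) ℝ) :
    frobNorm A ≤ ∑ a, ∑ b, |A a b| := by
  rw [frobNorm]
  have h1 : ∑ a, ∑ b, (A a b) ^ 2 ≤ (∑ a, ∑ b, |A a b|) ^ 2 := by
    calc ∑ a, ∑ b, (A a b) ^ 2
        = ∑ p ∈ Finset.univ ×ˢ Finset.univ, |A p.1 p.2| ^ 2 := by
          rw [Finset.sum_product]; simp [sq_abs]
      _ ≤ (∑ p ∈ Finset.univ ×ˢ Finset.univ, |A p.1 p.2|) ^ 2 :=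
          sum_sq_le_sq_sum _ _ (fun p _ => abs_nonneg _)
      _ = (∑ a, ∑ b, |A a b|) ^ 2 := by rw [Finset.sum_product]
  calc Real.sqrt (∑ a, ∑ b, (A a b) ^ 2) ≤ Real.sqrt ((∑ a, ∑ b, |A a b|) ^ 2) :=
        Real.sqrt_le_sqrt h1
    _ = ∑ a, ∑ b, |A a b| := Real.sqrt_sq (Finset.sum_nonneg fun a _ =>
        Finset.sum_nonneg fun b _ => abs_nonneg _)

lemma sum_cons_mul {k : ℕ} (a b : ℝ) (f g : Fin k → ℝ) :
    ∑ u, Fin.cons a f u * Fin.cons b g u = a * b + ∑ u, f u * g u := by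
  rw [Fin.sum_univ_succ]
  simp

/-- measurability of coordinates of the cons'd regressor -/
lemma cons_meas {𝒲 𝒳 : Type} [MeasurableSpace 𝒲] [MeasurableSpace 𝒳] {k : ℕ}
    (z : 𝒲 → 𝒳 → Fin k → ℝ) (hzmeas : Measurable fun p : 𝒲 × 𝒳 => z p.1 p.2)
    (a : Fin (k + 1)) :
    Measurable fun p : 𝒲 × 𝒳 => (Fin.cons (1:ℝ) (z p.1 p.2) : Fin (k+1) → ℝ) a := by
  induction a using Fin.cases with
  | zero => simp only [Fin.cons_zero]; exact measurable_const
  | succ i => simp only [Fin.cons_succ]; exact (measurable_pi_apply i).comp hzmeas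


variable [MeasurableSpace Ω] [MeasurableSpace 𝒲] [MeasurableSpace 𝒳]
  {μ : Measure Ω} [IsProbabilityMeasure μ]
  {W : ℕ → Ω → 𝒲} {X : ℕ → Ω → 𝒳}

lemma pairFam_meas (hWmeas : ∀ i, Measurable (W i)) (hXmeas : ∀ j, Measurable (X j)) :
    ∀ t, @Measurable _ _ _ (pairMS t) (pairFam W X t)
  | Sum.inl i => hWmeas i
  | Sum.inr j => hXmeas j

omit [IsProbabilityMeasure μ] in
lemma indep_WX (hindep : iIndepFun (m := pairMS) (pairFam W X) μ)
    (i j : ℕ) : IndepFun (W i) (X j) μ :=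
  hindep.indepFun (show (Sum.inl i : ℕ ⊕ ℕ) ≠ Sum.inr j by simp)

lemma pair_identDistrib (hindep : iIndepFun (m := pairMS) (pairFam W X) μ)
    (hWmeas : ∀ i, Measurable (W i)) (hXmeas : ∀ j, Measurable (X j))
    (hidW : ∀ i, IdentDistrib (W i) (W 1) μ μ)
    (hidX : ∀ j, IdentDistrib (X j) (X 1) μ μ)
    (i j : ℕ) :
    IdentDistrib (fun ω => (W i ω, X j ω)) (fun ω => (W 1 ω, X 2 ω)) μ μ := by
  have h1 : ∀ i j : ℕ, μ.map (fun ω => (W i ω, X j ω))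
      = (μ.map (W i)).prod (μ.map (X j)) := fun i j =>
    (indepFun_iff_map_prod_eq_prod_map_map (hWmeas i).aemeasurable
      (hXmeas j).aemeasurable).1 (indep_WX hindep i j)
  refine ⟨((hWmeas i).prodMk (hXmeas j)).aemeasurable,
    ((hWmeas 1).prodMk (hXmeas 2)).aemeasurable, ?_⟩
  rw [h1 i j, h1 1 2, (hidW i).map_eq, ((hidX j).trans (hidX 2).symm).map_eq]

/-- bounded measurable functions are integrable on a probability space -/
lemma int_of_bdd {φ : Ω → ℝ} (hφ : Measurable φ) {C : ℝ} (hbd : ∀ ω, |φ ω| ≤ C) :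
    Integrable φ μ :=
  Integrable.mono' (integrable_const C) hφ.aestronglyMeasurable (ae_of_all _ hbd)

/-- Nonasymptotic Chebyshev bound for the dyadic sample mean. -/
lemma dyadic_chebyshev
    (hindep : iIndepFun (m := pairMS) (pairFam W X) μ)
    (hWmeas : ∀ i, Measurable (W i)) (hXmeas : ∀ j, Measurable (X j))
    (hidW : ∀ i, IdentDistrib (W i) (W 1) μ μ)
    (hidX : ∀ j, IdentDistrib (X j) (X 1) μ μ)
    (f : 𝒲 → 𝒳 → ℝ) (hf : Measurable fun p : 𝒲 × 𝒳 => f p.1 p.2)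
    (B : ℝ) (hB : ∀ w x, |f w x| ≤ B)
    (N M : ℕ) (hN : 1 ≤ N) (hM : 1 ≤ M) (ε : ℝ) (hε : 0 < ε) :
    (μ {ω | ε ≤ |((N:ℝ) * M)⁻¹ * (∑ i ∈ Finset.Icc 1 N, ∑ j ∈ Finset.Icc 1 M,
        f (W i ω) (X j ω)) - ∫ ω, f (W 1 ω) (X 2 ω) ∂μ|}).toReal
      ≤ ε⁻¹ ^ 2 * (4 * B ^ 2) * ((N:ℝ)⁻¹ + (M:ℝ)⁻¹) := by
  have hΩ : Nonempty Ω := by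
    by_contra h
    rw [not_nonempty_iff] at h
    have h1 : μ Set.univ = 1 := measure_univ
    simp [Set.univ_eq_empty_iff.2 h] at h1
  obtain ⟨ω₀⟩ := hΩ
  have hB0 : 0 ≤ B := le_trans (abs_nonneg _) (hB (W 1 ω₀) (X 1 ω₀))
  set m : ℝ := ∫ ω, f (W 1 ω) (X 2 ω) ∂μ with hm_def
  set g : ℕ → ℕ → Ω → ℝ := fun i j ω => f (W i ω) (X j ω) - m with hg_def
  set I : Finset ℕ := Finset.Icc 1 N with hI_def
  set J : Finset ℕ := Finset.Icc 1 M with hJ_def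
  have hIcard : I.card = N := by simp [hI_def]
  have hJcard : J.card = M := by simp [hJ_def]
  have hN0 : (0:ℝ) < N := by exact_mod_cast hN
  have hM0 : (0:ℝ) < M := by exact_mod_cast hM
  have hNM : ((N:ℝ) * M) ≠ 0 := by positivity
  -- measurability and integrability of the pieces
  have hfmeas : ∀ i j, Measurable (fun ω => f (W i ω) (X j ω)) := fun i j =>
    hf.comp ((hWmeas i).prodMk (hXmeas j))
  have hfbd : ∀ i j ω, |f (W i ω) (X j ω)| ≤ B := fun i j ω => hB _ _
  have hfint : ∀ i j, Integrable (fun ω => f (W i ω) (X j ω)) μ := fun i j =>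
    int_of_bdd (hfmeas i j) (hfbd i j)
  have hmbd : |m| ≤ B := by
    rw [hm_def, ← Real.norm_eq_abs]
    have := norm_integral_le_of_norm_le_const (μ := μ)
      (f := fun ω => f (W 1 ω) (X 2 ω)) (C := B) (ae_of_all _ fun ω => hB _ _)
    simpa using this
  have hgmeas : ∀ i j, Measurable (g i j) := fun i j =>
    (hfmeas i j).sub measurable_const
  have hgbd : ∀ i j ω, |g i j ω| ≤ 2 * B := fun i j ω => by
    have := abs_sub (f (W i ω) (X j ω)) m
    calc |g i j ω| ≤ |f (W i ω) (X j ω)| + |m| := abs_sub _ _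
      _ ≤ B + B := add_le_add (hB _ _) hmbd
      _ = 2 * B := by ring
  have hgint : ∀ i j, Integrable (g i j) μ := fun i j =>
    int_of_bdd (hgmeas i j) (hgbd i j)
  have hgmean : ∀ i j, ∫ ω, g i j ω ∂μ = 0 := by
    intro i j
    have hid : ∫ ω, f (W i ω) (X j ω) ∂μ = m :=
      ((pair_identDistrib hindep hWmeas hXmeas hidW hidX i j).comp hf).integral_eq
    rw [hg_def]
    simp only
    rw [integral_sub (hfint i j) (integrable_const m), hid, integral_const]
    simp
  have hprodint : ∀ i j i' j', Integrable (fun ω => g i j ω * g i' j' ω) μ := by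
    intro i j i' j'
    refine int_of_bdd ((hgmeas i j).mul (hgmeas i' j')) (C := (2*B)*(2*B)) fun ω => ?_
    rw [abs_mul]
    exact mul_le_mul (hgbd _ _ _) (hgbd _ _ _) (abs_nonneg _) (by linarith)
  have hcov : ∀ i j i' j', i ≠ i' → j ≠ j' → ∫ ω, g i j ω * g i' j' ω ∂μ = 0 := by
    intro i j i' j' hii hjj
    have hpair : IndepFun (fun ω => (W i ω, X j ω)) (fun ω => (W i' ω, X j' ω)) μ :=
      hindep.indepFun_prodMk_prodMk (pairFam_meas hWmeas hXmeas)
        (Sum.inl i) (Sum.inr j) (Sum.inl i') (Sum.inr j')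
        (by simpa using hii) (by simp) (by simp) (by simpa using hjj)
    have hu : Measurable (fun p : 𝒲 × 𝒳 => f p.1 p.2 - m) := hf.sub measurable_const
    have hgind : IndepFun (g i j) (g i' j') μ := hpair.comp hu hu
    have h := hgind.integral_fun_mul_eq_mul_integral (hgint i j).aestronglyMeasurable (hgint i' j').aestronglyMeasurable
    rw [hgmean, hgmean, mul_zero] at h
    exact h
  -- the centered mean
  set S : Ω → ℝ := fun ω => ((N:ℝ) * M)⁻¹ *
    (∑ i ∈ I, ∑ j ∈ J, f (W i ω) (X j ω)) with hS_def
  have key1 : ∀ ω, S ω - m = ((N:ℝ) * M)⁻¹ * ∑ i ∈ I, ∑ j ∈ J, g i j ω := by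
    intro ω
    have : ∑ i ∈ I, ∑ j ∈ J, g i j ω
        = (∑ i ∈ I, ∑ j ∈ J, f (W i ω) (X j ω)) - (N:ℝ) * M * m := by
      rw [hg_def]
      simp only [Finset.sum_sub_distrib, Finset.sum_const, hIcard, hJcard, nsmul_eq_mul]
      ring
    rw [this, hS_def, mul_sub]
    field_simp
  have hSmbd : ∀ ω, |S ω - m| ≤ 2 * B := by
    intro ω
    rw [key1 ω, abs_mul, abs_inv]
    rw [abs_of_pos (by positivity : (0:ℝ) < (N:ℝ)*M)]
    have habs : |∑ i ∈ I, ∑ j ∈ J, g i j ω| ≤ (N:ℝ) * M * (2*B) := by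
      calc |∑ i ∈ I, ∑ j ∈ J, g i j ω| ≤ ∑ i ∈ I, |∑ j ∈ J, g i j ω| :=
            Finset.abs_sum_le_sum_abs _ _
        _ ≤ ∑ i ∈ I, ∑ j ∈ J, |g i j ω| := by
            refine Finset.sum_le_sum fun i _ => Finset.abs_sum_le_sum_abs _ _
        _ ≤ ∑ i ∈ I, ∑ j ∈ J, (2*B) := by
            refine Finset.sum_le_sum fun i _ => Finset.sum_le_sum fun j _ => hgbd i j ω
        _ = (N:ℝ) * M * (2*B) := by
            simp [Finset.sum_const, hIcard, hJcard]; ring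
    calc ((N:ℝ)*M)⁻¹ * |∑ i ∈ I, ∑ j ∈ J, g i j ω|
        ≤ ((N:ℝ)*M)⁻¹ * ((N:ℝ) * M * (2*B)) := by
          apply mul_le_mul_of_nonneg_left habs (by positivity)
      _ = 2 * B := by field_simp
  -- expansion of the second moment
  have expand : ∀ ω, (S ω - m)^2 = ((N:ℝ)*M)⁻¹^2 *
      ∑ i ∈ I, ∑ i' ∈ I, ∑ j ∈ J, ∑ j' ∈ J, g i j ω * g i' j' ω := by
    intro ω
    rw [key1 ω, mul_pow]
    congr 1
    rw [sq, Finset.sum_mul_sum]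
    refine Finset.sum_congr rfl fun i _ => Finset.sum_congr rfl fun i' _ => ?_
    rw [Finset.sum_mul_sum]
  have swap : ∫ ω, (∑ i ∈ I, ∑ i' ∈ I, ∑ j ∈ J, ∑ j' ∈ J, g i j ω * g i' j' ω) ∂μ
      = ∑ i ∈ I, ∑ i' ∈ I, ∑ j ∈ J, ∑ j' ∈ J, ∫ ω, g i j ω * g i' j' ω ∂μ := by
    rw [integral_finset_sum _ (fun i _ => integrable_finset_sum _ (fun i' _ =>
      integrable_finset_sum _ (fun j _ => integrable_finset_sum _ (fun j' _ =>
        hprodint i j i' j'))))]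
    refine Finset.sum_congr rfl fun i _ => ?_
    rw [integral_finset_sum _ (fun i' _ => integrable_finset_sum _ (fun j _ =>
      integrable_finset_sum _ (fun j' _ => hprodint i j i' j')))]
    refine Finset.sum_congr rfl fun i' _ => ?_
    rw [integral_finset_sum _ (fun j _ => integrable_finset_sum _ (fun j' _ =>
      hprodint i j i' j'))]
    refine Finset.sum_congr rfl fun j _ => ?_
    exact integral_finset_sum _ (fun j' _ => hprodint i j i' j')
  have hterm : ∀ i i' j j', |∫ ω, g i j ω * g i' j' ω ∂μ|
      ≤ 4 * B^2 * ((if i = i' then (1:ℝ) else 0) + (if j = j' then (1:ℝ) else 0)) := by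
    intro i i' j j'
    by_cases hii : i = i'
    · have hbd : |∫ ω, g i j ω * g i' j' ω ∂μ| ≤ 4 * B^2 := by
        rw [← Real.norm_eq_abs]
        have := norm_integral_le_of_norm_le_const (μ := μ)
          (f := fun ω => g i j ω * g i' j' ω) (C := 4 * B^2)
          (ae_of_all _ fun ω => by
            rw [Real.norm_eq_abs, abs_mul]
            calc |g i j ω| * |g i' j' ω| ≤ (2*B) * (2*B) :=
                mul_le_mul (hgbd _ _ _) (hgbd _ _ _) (abs_nonneg _) (by linarith)
              _ = 4 * B^2 := by ring)
        simpa using this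
      refine hbd.trans ?_
      have h0 : (0:ℝ) ≤ if j = j' then (1:ℝ) else 0 := by positivity
      rw [if_pos hii]
      nlinarith [mul_nonneg (show (0:ℝ) ≤ 4*B^2 by positivity) h0, sq_nonneg B]
    · by_cases hjj : j = j'
      · have hbd : |∫ ω, g i j ω * g i' j' ω ∂μ| ≤ 4 * B^2 := by
          rw [← Real.norm_eq_abs]
          have := norm_integral_le_of_norm_le_const (μ := μ)
            (f := fun ω => g i j ω * g i' j' ω) (C := 4 * B^2)
            (ae_of_all _ fun ω => by
              rw [Real.norm_eq_abs, abs_mul]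
              calc |g i j ω| * |g i' j' ω| ≤ (2*B) * (2*B) :=
                  mul_le_mul (hgbd _ _ _) (hgbd _ _ _) (abs_nonneg _) (by linarith)
                _ = 4 * B^2 := by ring)
          simpa using this
        refine hbd.trans ?_
        rw [if_pos hjj, if_neg hii]
        nlinarith [sq_nonneg B]
      · rw [hcov i j i' j' hii hjj]
        simp [if_neg hii, if_neg hjj]
  -- counting
  have hcount : ∑ i ∈ I, ∑ i' ∈ I, ∑ j ∈ J, ∑ j' ∈ J,
      (4 * B^2 * ((if i = i' then (1:ℝ) else 0) + (if j = j' then (1:ℝ) else 0)))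
      = 4 * B^2 * ((N:ℝ) * M^2 + (N:ℝ)^2 * M) := by
    have split : ∀ i i' j j' : ℕ,
        4 * B^2 * ((if i = i' then (1:ℝ) else 0) + (if j = j' then (1:ℝ) else 0))
        = 4 * B^2 * (if i = i' then (1:ℝ) else 0)
          + 4 * B^2 * (if j = j' then (1:ℝ) else 0) := by
      intro i i' j j'; ring
    simp only [split, Finset.sum_add_distrib]
    have e1 : ∑ i ∈ I, ∑ i' ∈ I, ∑ j ∈ J, ∑ j' ∈ J,
        (4 * B^2 * (if i = i' then (1:ℝ) else 0)) = 4 * B^2 * ((N:ℝ) * M^2) := by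
      have inner : ∀ i ∈ I, ∑ i' ∈ I, ∑ j ∈ J, ∑ j' ∈ J,
          (4 * B^2 * (if i = i' then (1:ℝ) else 0))
          = (M:ℝ) * ((M:ℝ) * (4 * B^2)) := by
        intro i hi
        simp only [Finset.sum_const, hJcard, nsmul_eq_mul]
        rw [← Finset.mul_sum, ← Finset.mul_sum, ← Finset.mul_sum,
          Finset.sum_ite_eq, if_pos hi]
        ring
      rw [Finset.sum_congr rfl inner, Finset.sum_const, hIcard, nsmul_eq_mul]
      ring
    have e2 : ∑ i ∈ I, ∑ i' ∈ I, ∑ j ∈ J, ∑ j' ∈ J,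
        (4 * B^2 * (if j = j' then (1:ℝ) else 0)) = 4 * B^2 * ((N:ℝ)^2 * M) := by
      have inner2 : ∀ j ∈ J, ∑ j' ∈ J, (4 * B^2 * (if j = j' then (1:ℝ) else 0))
          = 4 * B^2 := by
        intro j hj
        rw [← Finset.mul_sum, Finset.sum_ite_eq, if_pos hj, mul_one]
      have inner : ∀ i ∈ I, ∑ i' ∈ I, ∑ j ∈ J, ∑ j' ∈ J,
          (4 * B^2 * (if j = j' then (1:ℝ) else 0))
          = (N:ℝ) * ((M:ℝ) * (4 * B^2)) := by
        intro i _
        have : ∀ i' ∈ I, ∑ j ∈ J, ∑ j' ∈ J,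
            (4 * B^2 * (if j = j' then (1:ℝ) else 0)) = (M:ℝ) * (4 * B^2) := by
          intro i' _
          rw [Finset.sum_congr rfl inner2, Finset.sum_const, hJcard, nsmul_eq_mul]
        rw [Finset.sum_congr rfl this, Finset.sum_const, hIcard, nsmul_eq_mul]
      rw [Finset.sum_congr rfl inner, Finset.sum_const, hIcard, nsmul_eq_mul]
      ring
    rw [e1, e2]
    ring
  -- second moment bound
  have hsq_eq : ∫ ω, (S ω - m)^2 ∂μ = ((N:ℝ)*M)⁻¹^2 *
      ∑ i ∈ I, ∑ i' ∈ I, ∑ j ∈ J, ∑ j' ∈ J, ∫ ω, g i j ω * g i' j' ω ∂μ := by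
    simp_rw [expand]
    rw [integral_const_mul, swap]
  have hQbd : ∑ i ∈ I, ∑ i' ∈ I, ∑ j ∈ J, ∑ j' ∈ J, ∫ ω, g i j ω * g i' j' ω ∂μ
      ≤ 4 * B^2 * ((N:ℝ) * M^2 + (N:ℝ)^2 * M) := by
    rw [← hcount]
    refine Finset.sum_le_sum fun i _ => Finset.sum_le_sum fun i' _ =>
      Finset.sum_le_sum fun j _ => Finset.sum_le_sum fun j' _ =>
      le_trans (le_abs_self _) (hterm i i' j j')
  have hsq_bound : ∫ ω, (S ω - m)^2 ∂μ ≤ 4 * B^2 * ((N:ℝ)⁻¹ + (M:ℝ)⁻¹) := by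
    rw [hsq_eq]
    calc ((N:ℝ)*M)⁻¹^2 * ∑ i ∈ I, ∑ i' ∈ I, ∑ j ∈ J, ∑ j' ∈ J,
          ∫ ω, g i j ω * g i' j' ω ∂μ
        ≤ ((N:ℝ)*M)⁻¹^2 * (4 * B^2 * ((N:ℝ) * M^2 + (N:ℝ)^2 * M)) := by
          apply mul_le_mul_of_nonneg_left hQbd (by positivity)
      _ = 4 * B^2 * ((N:ℝ)⁻¹ + (M:ℝ)⁻¹) := by
          field_simp
  -- Chebyshev
  have hSmeas : Measurable S := by
    apply Measurable.const_mul
    exact Finset.measurable_sum I fun i _ => Finset.measurable_sum J fun j _ => hfmeas i j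
  have hsqint : Integrable (fun ω => (S ω - m)^2) μ := by
    refine int_of_bdd ((hSmeas.sub measurable_const).pow_const 2) (C := 4 * B^2) fun ω => ?_
    rw [abs_of_nonneg (sq_nonneg _)]
    have := hSmbd ω
    nlinarith [abs_nonneg (S ω - m), sq_abs (S ω - m)]
  have hset : {ω | ε ≤ |S ω - m|} = {ω | ε^2 ≤ (S ω - m)^2} := by
    ext ω
    simp only [Set.mem_setOf_eq]
    constructor
    · intro h
      nlinarith [abs_nonneg (S ω - m), sq_abs (S ω - m)]
    · intro h
      nlinarith [abs_nonneg (S ω - m), sq_abs (S ω - m)]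
  have cheb := mul_meas_ge_le_integral_of_nonneg
    (ae_of_all μ fun ω => sq_nonneg (S ω - m)) hsqint (ε^2)
  rw [hset]
  have hfinal : ε^2 * (μ {ω | ε^2 ≤ (S ω - m)^2}).toReal
      ≤ 4 * B^2 * ((N:ℝ)⁻¹ + (M:ℝ)⁻¹) := le_trans cheb hsq_bound
  have hε2 : (0:ℝ) < ε^2 := by positivity
  calc (μ {ω | ε^2 ≤ (S ω - m)^2}).toReal
      = ε⁻¹^2 * (ε^2 * (μ {ω | ε^2 ≤ (S ω - m)^2}).toReal) := by
        field_simp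
    _ ≤ ε⁻¹^2 * (4 * B^2 * ((N:ℝ)⁻¹ + (M:ℝ)⁻¹)) := by
        apply mul_le_mul_of_nonneg_left hfinal (by positivity)
    _ = ε⁻¹^2 * (4 * B^2) * ((N:ℝ)⁻¹ + (M:ℝ)⁻¹) := by ring


/-- The limiting integrand. -/
noncomputable def Freg (z : 𝒲 → 𝒳 → Fin k → ℝ) (α : ℝ) (β : Fin k → ℝ)
    (a b : Fin (k + 1)) (w : 𝒲) (x : 𝒳) : ℝ :=
  α * Real.exp (∑ u, z w x u * β u) *
    (Fin.cons 1 (z w x) : Fin (k + 1) → ℝ) a * (Fin.cons 1 (z w x) : Fin (k + 1) → ℝ) b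


lemma Freg_meas (z : 𝒲 → 𝒳 → Fin k → ℝ) (hzmeas : Measurable fun p : 𝒲 × 𝒳 => z p.1 p.2)
    (α : ℝ) (β : Fin k → ℝ) (a b : Fin (k + 1)) :
    Measurable fun p : 𝒲 × 𝒳 => Freg z α β a b p.1 p.2 := by
  have ht : Measurable fun p : 𝒲 × 𝒳 => ∑ u, z p.1 p.2 u * β u :=
    Finset.measurable_sum _ fun u _ => ((measurable_pi_apply u).comp hzmeas).mul_const _
  exact ((measurable_const.mul (Real.measurable_exp.comp ht)).mul
    (cons_meas z hzmeas a)).mul (cons_meas z hzmeas b)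

lemma cons_abs_le {z : 𝒲 → 𝒳 → Fin k → ℝ} {C' : ℝ}
    (hC' : ∀ w x u, |z w x u| ≤ C') (w : 𝒲) (x : 𝒳) (a : Fin (k + 1)) :
    |(Fin.cons 1 (z w x) : Fin (k + 1) → ℝ) a| ≤ max 1 C' := by
  induction a using Fin.cases with
  | zero => simp
  | succ u => simp only [Fin.cons_succ]; exact (hC' w x u).trans (le_max_right _ _)

lemma t_abs_le {z : 𝒲 → 𝒳 → Fin k → ℝ} {C' : ℝ} (β : Fin k → ℝ)
    (hC' : ∀ w x u, |z w x u| ≤ C') (w : 𝒲) (x : 𝒳) :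
    |∑ u, z w x u * β u| ≤ C' * ∑ u, |β u| := by
  calc |∑ u, z w x u * β u| ≤ ∑ u, |z w x u * β u| := Finset.abs_sum_le_sum_abs _ _
    _ ≤ ∑ u, C' * |β u| := Finset.sum_le_sum fun u _ => by
        rw [abs_mul]
        exact mul_le_mul_of_nonneg_right (hC' w x u) (abs_nonneg _)
    _ = C' * ∑ u, |β u| := by rw [Finset.mul_sum]

lemma Freg_bd {z : 𝒲 → 𝒳 → Fin k → ℝ} {α C' : ℝ} {β : Fin k → ℝ}
    (hα : 0 < α) (hC' : ∀ w x u, |z w x u| ≤ C')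
    (a b : Fin (k + 1)) (w : 𝒲) (x : 𝒳) :
    |Freg z α β a b w x| ≤ α * Real.exp (C' * ∑ u, |β u|) * (max 1 C') ^ 2 := by
  rw [Freg, abs_mul, abs_mul, abs_mul, abs_of_pos hα, abs_of_pos (Real.exp_pos _)]
  have h1 : Real.exp (∑ u, z w x u * β u) ≤ Real.exp (C' * ∑ u, |β u|) :=
    Real.exp_le_exp.2 (le_trans (le_abs_self _) (t_abs_le β hC' w x))
  have h2 := cons_abs_le hC' w x a
  have h3 := cons_abs_le hC' w x b
  have hm1 : (1:ℝ) ≤ max 1 C' := le_max_left _ _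
  calc α * Real.exp (∑ u, z w x u * β u) * |(Fin.cons 1 (z w x) : Fin (k+1) → ℝ) a|
        * |(Fin.cons 1 (z w x) : Fin (k+1) → ℝ) b|
      ≤ α * Real.exp (C' * ∑ u, |β u|) * max 1 C' * max 1 C' := by
        have e1 : (0:ℝ) ≤ α * Real.exp (C' * ∑ u, |β u|) :=
          mul_nonneg hα.le (Real.exp_pos _).le
        have e2 : (0:ℝ) ≤ α * Real.exp (C' * ∑ u, |β u|) * max 1 C' :=
          mul_nonneg e1 (le_trans zero_le_one hm1)
        apply mul_le_mul _ h3 (abs_nonneg _) e2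
        apply mul_le_mul _ h2 (abs_nonneg _) e1
        exact mul_le_mul_of_nonneg_left h1 hα.le
    _ = α * Real.exp (C' * ∑ u, |β u|) * (max 1 C') ^ 2 := by ring

lemma Gamma_eq (μ : Measure Ω) (z : 𝒲 → 𝒳 → Fin k → ℝ) (W : ℕ → Ω → 𝒲) (X : ℕ → Ω → 𝒳)
    (α : ℝ) (β : Fin k → ℝ) (a b : Fin (k + 1)) :
    GammaMat μ z W X α β a b = -(∫ ω, Freg z α β a b (W 1 ω) (X 2 ω) ∂μ) := by
  show -(α * ∫ ω, Real.exp (∑ u, z (W 1 ω) (X 2 ω) u * β u) *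
      Rreg z W X 1 2 ω a * Rreg z W X 1 2 ω b ∂μ) = _
  rw [← integral_const_mul]
  congr 1
  apply integral_congr_ae
  filter_upwards with ω
  simp only [Freg, Rreg]
  ring

set_option maxHeartbeats 2000000 in
/-- Per-entry deterministic reduction to the dyadic sample mean. -/
lemma entry_bound (μ : Measure Ω) (W : ℕ → Ω → 𝒲) (X : ℕ → Ω → 𝒳)
    (z : 𝒲 → 𝒳 → Fin k → ℝ) (α : ℝ) (β : Fin k → ℝ) (hα : 0 < α)
    (C' : ℝ) (hC'0 : 0 ≤ C') (hC' : ∀ w x u, |z w x u| ≤ C')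
    (n N M : ℕ) (hn : 1 ≤ n) (hN : 1 ≤ N) (hM : 1 ≤ M)
    (ω : Ω) (a b : Fin (k + 1)) :
    |((n : ℝ) • Hess z W X N M (thetaN n α β) ω - GammaMat μ z W X α β) a b|
      ≤ α ^ 2 * Real.exp (2 * (C' * ∑ u, |β u|)) * (2 + α * Real.exp (C' * ∑ u, |β u|))
          * (max 1 C') ^ 2 / n
        + |((N:ℝ) * M)⁻¹ * (∑ i ∈ Finset.Icc 1 N, ∑ j ∈ Finset.Icc 1 M,
            Freg z α β a b (W i ω) (X j ω))
          - ∫ ω', Freg z α β a b (W 1 ω') (X 2 ω') ∂μ| := by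
  set T := C' * ∑ u, |β u| with hT_def
  set K := α ^ 2 * Real.exp (2 * T) * (2 + α * Real.exp T) with hK_def
  set C₁ := max 1 C' with hC₁_def
  set I := Finset.Icc 1 N with hI_def
  set J := Finset.Icc 1 M with hJ_def
  have hIcard : I.card = N := by simp [hI_def]
  have hJcard : J.card = M := by simp [hJ_def]
  have hn0 : (0:ℝ) < n := by exact_mod_cast hn
  have hN0 : (0:ℝ) < N := by exact_mod_cast hN
  have hM0 : (0:ℝ) < M := by exact_mod_cast hM
  have hC₁1 : (1:ℝ) ≤ C₁ := le_max_left _ _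
  have hC₁0 : (0:ℝ) < C₁ := lt_of_lt_of_le one_pos hC₁1
  have hK0 : (0:ℝ) < K := by
    rw [hK_def]
    have := Real.exp_pos T
    have := Real.exp_pos (2*T)
    positivity
  set mF := ∫ ω', Freg z α β a b (W 1 ω') (X 2 ω') ∂μ with hmF_def
  set q : ℕ → ℕ → ℝ := fun i j =>
    (n:ℝ) * (logistic (∑ u, Rreg z W X i j ω u * thetaN n α β u) *
      (1 - logistic (∑ u, Rreg z W X i j ω u * thetaN n α β u))) *
      Rreg z W X i j ω a * Rreg z W X i j ω b with hq_def
  have hRbd : ∀ (i j : ℕ) (c : Fin (k+1)), |Rreg z W X i j ω c| ≤ C₁ :=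
    fun i j c => cons_abs_le hC' (W i ω) (X j ω) c
  have happrox : ∀ i j : ℕ, |q i j - Freg z α β a b (W i ω) (X j ω)| ≤ K * C₁^2 / n := by
    intro i j
    have hv : (∑ u, Rreg z W X i j ω u * thetaN n α β u)
        = Real.log (α / n) + ∑ u, z (W i ω) (X j ω) u * β u := by
      have h := sum_cons_mul (1:ℝ) (Real.log (α / n)) (z (W i ω) (X j ω)) β
      rw [one_mul] at h
      exact h
    have hd := det_approx α T hα n hn (∑ u, z (W i ω) (X j ω) u * β u)
      (t_abs_le β hC' (W i ω) (X j ω))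
    rw [← hK_def] at hd
    have hfactor : q i j - Freg z α β a b (W i ω) (X j ω)
        = ((n:ℝ) * (logistic (Real.log (α / n) + ∑ u, z (W i ω) (X j ω) u * β u) *
            (1 - logistic (Real.log (α / n) + ∑ u, z (W i ω) (X j ω) u * β u)))
            - α * Real.exp (∑ u, z (W i ω) (X j ω) u * β u))
          * Rreg z W X i j ω a * Rreg z W X i j ω b := by
      rw [hq_def]
      simp only [hv]
      simp only [Freg, Rreg]
      ring
    rw [hfactor, abs_mul, abs_mul]
    calc |_| * |Rreg z W X i j ω a| * |Rreg z W X i j ω b|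
        ≤ (K / n) * C₁ * C₁ := by
          apply mul_le_mul _ (hRbd i j b) (abs_nonneg _) (by positivity)
          apply mul_le_mul hd (hRbd i j a) (abs_nonneg _) (by positivity)
      _ = K * C₁^2 / n := by ring
  have hGa : GammaMat μ z W X α β a b = -mF := Gamma_eq μ z W X α β a b
  have hHessApp : ((n : ℝ) • Hess z W X N M (thetaN n α β) ω - GammaMat μ z W X α β) a b
      = -(((N:ℝ) * M)⁻¹ * ∑ i ∈ I, ∑ j ∈ J, q i j) + mF := by
    rw [Matrix.sub_apply, Matrix.smul_apply, hGa, smul_eq_mul]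
    simp only [Hess, Matrix.of_apply]
    rw [mul_neg]
    have hpull : (n:ℝ) * (((N:ℝ) * M)⁻¹ * ∑ i ∈ I, ∑ j ∈ J,
        logistic (∑ u, Rreg z W X i j ω u * thetaN n α β u) *
          (1 - logistic (∑ u, Rreg z W X i j ω u * thetaN n α β u)) *
          Rreg z W X i j ω a * Rreg z W X i j ω b)
        = ((N:ℝ) * M)⁻¹ * ∑ i ∈ I, ∑ j ∈ J, q i j := by
      rw [mul_left_comm]
      congr 1
      rw [Finset.mul_sum]
      refine Finset.sum_congr rfl fun i _ => ?_
      rw [Finset.mul_sum]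
      refine Finset.sum_congr rfl fun j _ => ?_
      rw [hq_def]
      ring
    rw [hpull]
    ring
  have hsplit : -(((N:ℝ) * M)⁻¹ * ∑ i ∈ I, ∑ j ∈ J, q i j) + mF
      = -(((N:ℝ) * M)⁻¹ * ∑ i ∈ I, ∑ j ∈ J, (q i j - Freg z α β a b (W i ω) (X j ω)))
        - (((N:ℝ) * M)⁻¹ * (∑ i ∈ I, ∑ j ∈ J, Freg z α β a b (W i ω) (X j ω)) - mF) := by
    have hsub : ∑ i ∈ I, ∑ j ∈ J, (q i j - Freg z α β a b (W i ω) (X j ω))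
        = (∑ i ∈ I, ∑ j ∈ J, q i j) - ∑ i ∈ I, ∑ j ∈ J, Freg z α β a b (W i ω) (X j ω) := by
      simp [Finset.sum_sub_distrib]
    rw [hsub]
    ring
  rw [hHessApp, hsplit]
  have htri : ∀ P Q : ℝ, |-P - Q| ≤ |P| + |Q| := fun P Q => by
    rw [show -P - Q = -(P + Q) by ring, abs_neg]
    exact abs_add_le _ _
  refine le_trans (htri _ _) ?_
  have hfirst : |((N:ℝ) * M)⁻¹ * ∑ i ∈ I, ∑ j ∈ J,
      (q i j - Freg z α β a b (W i ω) (X j ω))| ≤ K * C₁^2 / n := by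
    rw [abs_mul, abs_inv, abs_of_pos (by positivity : (0:ℝ) < (N:ℝ) * M)]
    have hsum : |∑ i ∈ I, ∑ j ∈ J, (q i j - Freg z α β a b (W i ω) (X j ω))|
        ≤ (N:ℝ) * M * (K * C₁^2 / n) := by
      calc |∑ i ∈ I, ∑ j ∈ J, (q i j - Freg z α β a b (W i ω) (X j ω))|
          ≤ ∑ i ∈ I, ∑ j ∈ J, |q i j - Freg z α β a b (W i ω) (X j ω)| :=
            le_trans (Finset.abs_sum_le_sum_abs _ _) (Finset.sum_le_sum fun i _ =>
              Finset.abs_sum_le_sum_abs _ _)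
        _ ≤ ∑ i ∈ I, ∑ j ∈ J, (K * C₁^2 / n) :=
            Finset.sum_le_sum fun i _ => Finset.sum_le_sum fun j _ => happrox i j
        _ = (N:ℝ) * M * (K * C₁^2 / n) := by
            simp [Finset.sum_const, hIcard, hJcard]
            ring
    calc ((N:ℝ) * M)⁻¹ * |∑ i ∈ I, ∑ j ∈ J, (q i j - Freg z α β a b (W i ω) (X j ω))|
        ≤ ((N:ℝ) * M)⁻¹ * ((N:ℝ) * M * (K * C₁^2 / n)) :=
          mul_le_mul_of_nonneg_left hsum (by positivity)
      _ = K * C₁^2 / n := by field_simp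
  exact add_le_add hfirst le_rfl

end Aux

/-- pointwise (in `θ`) convergence in probability of the rescaled
composite-likelihood Hessian: `n H_n(θ_n) → Γ(θ)` under sparse asymptotics. -/
theorem statement14
    [MeasurableSpace Ω] [MeasurableSpace 𝒲] [MeasurableSpace 𝒳]
    (μ : Measure Ω) [IsProbabilityMeasure μ]
    (W : ℕ → Ω → 𝒲) (X : ℕ → Ω → 𝒳)
    (hWmeas : ∀ i, Measurable (W i)) (hXmeas : ∀ j, Measurable (X j))
    (hindep : iIndepFun (m := pairMS) (pairFam W X) μ)
    (hidW : ∀ i, IdentDistrib (W i) (W 1) μ μ)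
    (hidX : ∀ j, IdentDistrib (X j) (X 1) μ μ)
    (z : 𝒲 → 𝒳 → Fin k → ℝ) (hzmeas : Measurable fun p : 𝒲 × 𝒳 => z p.1 p.2)
    (hzbd : ∃ C : ℝ, ∀ w x u, |z w x u| ≤ C)
    (N M : ℕ → ℕ) (hNM : ∀ n, N n + M n = n)
    (φ : ℝ) (hφ : φ ∈ Set.Ioo (0 : ℝ) 1)
    (hMφ : Tendsto (fun n : ℕ => (M n : ℝ) / n) atTop (𝓝 φ))
    (α : ℝ) (hα : 0 < α) (β : Fin k → ℝ) :
    ∀ ε : ℝ, 0 < ε →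
      Tendsto (fun n : ℕ =>
          μ {ω | ε ≤ frobNorm
              ((n : ℝ) • Hess z W X (N n) (M n) (thetaN n α β) ω -
                GammaMat μ z W X α β)})
        atTop (𝓝 0) := by
  intro ε hε
  obtain ⟨C0, hC0⟩ := hzbd
  set C' := max C0 0 with hC'_def
  have hC'0 : (0:ℝ) ≤ C' := le_max_right _ _
  have hC' : ∀ w x u, |z w x u| ≤ C' := fun w x u => (hC0 w x u).trans (le_max_left _ _)
  set T := C' * ∑ u, |β u| with hT_def
  have hT0 : 0 ≤ T := mul_nonneg hC'0 (Finset.sum_nonneg fun u _ => abs_nonneg _)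
  set C₁ := max 1 C' with hC₁_def
  have hC₁1 : (1:ℝ) ≤ C₁ := le_max_left _ _
  have hC₁0 : (0:ℝ) < C₁ := lt_of_lt_of_le one_pos hC₁1
  set K := α ^ 2 * Real.exp (2 * T) * (2 + α * Real.exp T) with hK_def
  have hK0 : (0:ℝ) < K := by
    have h1 := Real.exp_pos T
    have h2 := Real.exp_pos (2 * T)
    rw [hK_def]; positivity
  set B := α * Real.exp T * C₁ ^ 2 with hB_def
  have hB0 : (0:ℝ) < B := by
    have h1 := Real.exp_pos T
    rw [hB_def]; positivity
  set ε' := ε / ((k:ℝ) + 1) ^ 2 with hε'_def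
  have hε'0 : 0 < ε' := by rw [hε'_def]; positivity
  obtain ⟨hφ0, hφ1⟩ := hφ
  -- asymptotics of N and M
  have hNn : ∀ n : ℕ, (N n : ℝ) = (n : ℝ) - M n := by
    intro n
    have h : ((N n : ℕ) : ℝ) + M n = n := by exact_mod_cast congrArg (Nat.cast : ℕ → ℝ) (hNM n)
    linarith
  have hNφ : Tendsto (fun n : ℕ => (N n : ℝ) / n) atTop (𝓝 (1 - φ)) := by
    have h : Tendsto (fun n : ℕ => 1 - (M n : ℝ) / n) atTop (𝓝 (1 - φ)) :=
      tendsto_const_nhds.sub hMφ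
    refine Tendsto.congr' ?_ h
    filter_upwards [eventually_ge_atTop 1] with n hn
    have hn0 : (0:ℝ) < n := by exact_mod_cast hn
    rw [hNn n]
    field_simp
  have hMlow : ∀ᶠ n : ℕ in atTop, φ / 2 * n ≤ (M n : ℝ) := by
    filter_upwards [hMφ.eventually (eventually_gt_nhds (by linarith : φ / 2 < φ)),
      eventually_gt_atTop 0] with n h hn0
    have hn0' : (0:ℝ) < n := by exact_mod_cast hn0
    have := (lt_div_iff₀ hn0').1 h
    linarith
  have hNlow : ∀ᶠ n : ℕ in atTop, (1 - φ) / 2 * n ≤ (N n : ℝ) := by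
    filter_upwards [hNφ.eventually (eventually_gt_nhds (by linarith : (1 - φ) / 2 < 1 - φ)),
      eventually_gt_atTop 0] with n h hn0
    have hn0' : (0:ℝ) < n := by exact_mod_cast hn0
    have := (lt_div_iff₀ hn0').1 h
    linarith
  have hMtop : Tendsto (fun n : ℕ => (M n : ℝ)) atTop atTop :=
    tendsto_atTop_mono' _ hMlow
      (Tendsto.const_mul_atTop (by linarith : (0:ℝ) < φ / 2) tendsto_natCast_atTop_atTop)
  have hNtop : Tendsto (fun n : ℕ => (N n : ℝ)) atTop atTop :=
    tendsto_atTop_mono' _ hNlow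
      (Tendsto.const_mul_atTop (by linarith : (0:ℝ) < (1 - φ) / 2) tendsto_natCast_atTop_atTop)
  have hM1 : ∀ᶠ n : ℕ in atTop, 1 ≤ M n := by
    filter_upwards [hMtop.eventually_ge_atTop 1] with n h
    exact_mod_cast h
  have hN1 : ∀ᶠ n : ℕ in atTop, 1 ≤ N n := by
    filter_upwards [hNtop.eventually_ge_atTop 1] with n h
    exact_mod_cast h
  have hdet : ∀ᶠ n : ℕ in atTop, K * C₁ ^ 2 / n ≤ ε' / 2 := by
    have h : Tendsto (fun n : ℕ => K * C₁ ^ 2 / n) atTop (𝓝 0) := by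
      have h2 : Tendsto (fun n : ℕ => (K * C₁ ^ 2) * ((n : ℝ))⁻¹) atTop (𝓝 ((K * C₁^2) * 0)) :=
        Tendsto.const_mul _ (tendsto_natCast_atTop_atTop (R := ℝ)).inv_tendsto_atTop
      simpa [div_eq_mul_inv] using h2
    exact h.eventually (eventually_le_nhds (by positivity))
  set c₀ := (ε' / 2)⁻¹ ^ 2 * (4 * B ^ 2) with hc₀_def
  have hc₀0 : 0 ≤ c₀ := by rw [hc₀_def]; positivity
  -- the dominating sequence
  have hgbd0 : Tendsto (fun n : ℕ => (((k : ENNReal) + 1) * ((k : ENNReal) + 1)) *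
      ENNReal.ofReal (c₀ * ((N n : ℝ)⁻¹ + (M n : ℝ)⁻¹))) atTop (𝓝 0) := by
    have hreal : Tendsto (fun n : ℕ => c₀ * ((N n : ℝ)⁻¹ + (M n : ℝ)⁻¹)) atTop
        (𝓝 (c₀ * (0 + 0))) :=
      Tendsto.const_mul _ (hNtop.inv_tendsto_atTop.add hMtop.inv_tendsto_atTop)
    simp only [add_zero, mul_zero] at hreal
    have hofreal : Tendsto (fun n : ℕ => ENNReal.ofReal (c₀ * ((N n : ℝ)⁻¹ + (M n : ℝ)⁻¹)))
        atTop (𝓝 0) := by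
      have := ENNReal.tendsto_ofReal hreal
      simpa using this
    have := ENNReal.Tendsto.const_mul
      (a := ((k : ENNReal) + 1) * ((k : ENNReal) + 1)) hofreal
      (Or.inr (by
        refine ENNReal.mul_ne_top ?_ ?_ <;> exact ENNReal.add_ne_top.2 ⟨ENNReal.natCast_ne_top k, ENNReal.one_ne_top⟩))
    simpa using this
  refine tendsto_of_tendsto_of_tendsto_of_le_of_le' tendsto_const_nhds hgbd0
    (Eventually.of_forall fun n => zero_le) ?_
  filter_upwards [hM1, hN1, hdet, eventually_ge_atTop 1] with n hM1n hN1n hdetn hn1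
  -- event inclusion
  have hsub : {ω | ε ≤ frobNorm ((n : ℝ) • Hess z W X (N n) (M n) (thetaN n α β) ω -
        GammaMat μ z W X α β)}
      ⊆ ⋃ a ∈ (Finset.univ : Finset (Fin (k + 1))),
          ⋃ b ∈ (Finset.univ : Finset (Fin (k + 1))),
        {ω | ε' / 2 ≤ |((N n : ℝ) * M n)⁻¹ *
            (∑ i ∈ Finset.Icc 1 (N n), ∑ j ∈ Finset.Icc 1 (M n),
              Freg z α β a b (W i ω) (X j ω))
          - ∫ ω', Freg z α β a b (W 1 ω') (X 2 ω') ∂μ|} := by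
    intro ω hω
    simp only [Set.mem_setOf_eq] at hω
    by_contra hcon
    simp only [Set.mem_iUnion, Set.mem_setOf_eq, not_exists, not_le] at hcon
    have hlt : ∀ a b : Fin (k + 1),
        |((n : ℝ) • Hess z W X (N n) (M n) (thetaN n α β) ω - GammaMat μ z W X α β) a b|
          < ε' := by
      intro a b
      have h1 := entry_bound μ W X z α β hα C' hC'0 hC' n (N n) (M n) hn1 hN1n hM1n ω a b
      rw [← hT_def, ← hC₁_def, ← hK_def] at h1
      have h2 := hcon a (Finset.mem_univ a) b (Finset.mem_univ b)
      calc |((n : ℝ) • Hess z W X (N n) (M n) (thetaN n α β) ω - GammaMat μ z W X α β) a b|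
          ≤ K * C₁ ^ 2 / n + _ := h1
        _ < ε' / 2 + ε' / 2 := by exact add_lt_add_of_le_of_lt hdetn h2
        _ = ε' := by ring
    have hA : ∀ a : Fin (k + 1), ∑ b, |((n : ℝ) • Hess z W X (N n) (M n) (thetaN n α β) ω -
        GammaMat μ z W X α β) a b| < ((k : ℝ) + 1) * ε' := by
      intro a
      have h := Finset.sum_lt_sum_of_nonempty Finset.univ_nonempty (fun b _ => hlt a b)
      rw [Finset.sum_const, Finset.card_univ, Fintype.card_fin, nsmul_eq_mul] at h
      exact_mod_cast h
    have hsumlt : ∑ a, ∑ b, |((n : ℝ) • Hess z W X (N n) (M n) (thetaN n α β) ω -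
        GammaMat μ z W X α β) a b| < ε := by
      have h := Finset.sum_lt_sum_of_nonempty Finset.univ_nonempty (fun a _ => hA a)
      rw [Finset.sum_const, Finset.card_univ, Fintype.card_fin, nsmul_eq_mul] at h
      have hcast : ((k + 1 : ℕ) : ℝ) = (k : ℝ) + 1 := by push_cast; ring
      rw [hcast] at h
      refine h.trans_le (le_of_eq ?_)
      rw [hε'_def]
      have hk0 : ((k:ℝ) + 1) ^ 2 ≠ 0 := by positivity
      field_simp
    have hfrob := frobNorm_le_sum_abs ((n : ℝ) • Hess z W X (N n) (M n) (thetaN n α β) ω -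
        GammaMat μ z W X α β)
    linarith
  -- the measure bound
  calc μ {ω | ε ≤ frobNorm ((n : ℝ) • Hess z W X (N n) (M n) (thetaN n α β) ω -
        GammaMat μ z W X α β)}
      ≤ μ (⋃ a ∈ (Finset.univ : Finset (Fin (k + 1))),
          ⋃ b ∈ (Finset.univ : Finset (Fin (k + 1))),
        {ω | ε' / 2 ≤ |((N n : ℝ) * M n)⁻¹ *
            (∑ i ∈ Finset.Icc 1 (N n), ∑ j ∈ Finset.Icc 1 (M n),
              Freg z α β a b (W i ω) (X j ω))
          - ∫ ω', Freg z α β a b (W 1 ω') (X 2 ω') ∂μ|}) := measure_mono hsub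
    _ ≤ ∑ a : Fin (k + 1), ∑ b : Fin (k + 1),
        μ {ω | ε' / 2 ≤ |((N n : ℝ) * M n)⁻¹ *
            (∑ i ∈ Finset.Icc 1 (N n), ∑ j ∈ Finset.Icc 1 (M n),
              Freg z α β a b (W i ω) (X j ω))
          - ∫ ω', Freg z α β a b (W 1 ω') (X 2 ω') ∂μ|} :=
        le_trans (measure_biUnion_finset_le _ _)
          (Finset.sum_le_sum fun a _ => measure_biUnion_finset_le _ _)
    _ ≤ ∑ _a : Fin (k + 1), ∑ _b : Fin (k + 1),
        ENNReal.ofReal (c₀ * ((N n : ℝ)⁻¹ + (M n : ℝ)⁻¹)) := by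
        refine Finset.sum_le_sum fun a _ => Finset.sum_le_sum fun b _ => ?_
        have hch := dyadic_chebyshev hindep hWmeas hXmeas hidW hidX
          (Freg z α β a b) (Freg_meas z hzmeas α β a b) B
          (fun w x => Freg_bd hα hC' a b w x)
          (N n) (M n) hN1n hM1n (ε' / 2) (by positivity)
        rw [← ENNReal.ofReal_toReal (measure_ne_top μ _)]
        apply ENNReal.ofReal_le_ofReal
        refine hch.trans (le_of_eq ?_)
        rw [hc₀_def]
    _ ≤ (((k : ENNReal) + 1) * ((k : ENNReal) + 1)) *
        ENNReal.ofReal (c₀ * ((N n : ℝ)⁻¹ + (M n : ℝ)⁻¹)) := by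
        rw [Finset.sum_const, Finset.sum_const, Finset.card_univ, Fintype.card_fin,
          nsmul_eq_mul, nsmul_eq_mul]
        rw [← mul_assoc]
        apply le_of_eq
        congr 1
        push_cast
        ring


end SparseNet
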